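/- The map φ sending a 2-1-3-avoiding permutation π ∈ S_n with right-to-left maxima π_{i_1}, ..., π_{i_m} (i_1 < ... < i_m = n) to the lattice path U^{i_1} D^{π_{i_1}-π_{i_2}} U^{i_2-i_1} D^{π_{i_2}-π_{i_3}} ⋯ U^{i_m-i_{m-1}} D^{π_{i_m}} is a bijection between 2-1-3-avoiding permutations of length n and Dyck paths with n up-steps and n down-steps. -/

import Mathlib

/-- `π` contains the classical pattern 2-1-3: indices `i < j < k` with `π j < π i < π k`. -/
def Contains213 {n : ℕ} (π : Equiv.Perm (Fin n)) : Prop :=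
  ∃ i j k : Fin n, i < j ∧ j < k ∧ π j < π i ∧ π i < π k

/-- A Dyck path of size `n`, encoded as a list of booleans (`true` = up-step `U`,
`false` = down-step `D`): length `2n`, `n` up-steps, and every prefix has at least
as many `U`'s as `D`'s. -/
def IsDyckPath (n : ℕ) (l : List Bool) : Prop :=
  l.length = 2 * n ∧ l.count true = n ∧
  ∀ p : List Bool, p <+: l → p.count false ≤ p.count true

/-- The sorted list of positions of right-to-left maxima of `π`. -/
def rlMaxima {n : ℕ} (π : Equiv.Perm (Fin n)) : List (Fin n) :=
  (Finset.univ.filter fun i : Fin n => ∀ j, i < j → π j < π i).sort (· ≤ ·)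

/-- The map `φ` sending a permutation with right-to-left maxima at positions
`i₁ < i₂ < ⋯ < i_m = n` to the lattice path
`U^{i₁} D^{π_{i₁}-π_{i₂}} U^{i₂-i₁} ⋯ U^{i_m-i_{m-1}} D^{π_{i_m}}`
(positions and values of `Fin n` are 0-indexed, hence the `+ 1`'s). -/
def phi {n : ℕ} (π : Equiv.Perm (Fin n)) : List Bool :=
  match rlMaxima π with
  | [] => []
  | i₁ :: rest =>
      List.replicate ((i₁ : ℕ) + 1) true ++
      (((i₁ :: rest).zip rest).flatMap fun p =>
        List.replicate ((π p.1 : ℕ) - (π p.2 : ℕ)) false ++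
        List.replicate ((p.2 : ℕ) - (p.1 : ℕ)) true) ++
      List.replicate ((π (rest.getLastD i₁) : ℕ) + 1) false

namespace StmtAux
open List Equiv

variable {n : ℕ} (π : Equiv.Perm (Fin n))

lemma mem_rlMaxima_iff {i : Fin n} : i ∈ rlMaxima π ↔ ∀ j, i < j → π j < π i := by
  simp [rlMaxima]

lemma rlMaxima_sorted : (rlMaxima π).Pairwise (· < ·) := (Finset.sortedLT_sort _).pairwise

lemma rlMaxima_eq_of {L : List (Fin n)} (hs : L.Pairwise (· < ·))
    (hm : ∀ i, i ∈ L ↔ ∀ j, i < j → π j < π i) : rlMaxima π = L := by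
  apply List.Perm.eq_of_pairwise' (rlMaxima_sorted π) hs
  rw [List.perm_ext_iff_of_nodup ((rlMaxima_sorted π).nodup) hs.nodup]
  intro a; rw [mem_rlMaxima_iff, hm]

lemma last_mem_rlMaxima (hn : 0 < n) : (⟨n-1, by omega⟩ : Fin n) ∈ rlMaxima π := by
  rw [mem_rlMaxima_iff]
  intro j hj
  exact absurd hj (by simp [Fin.lt_def]; omega)

lemma rlMaxima_ne_nil (hn : 0 < n) : rlMaxima π ≠ [] :=
  fun h => by simpa [h] using last_mem_rlMaxima π hn

/-- helper: in a `<`-sorted list, every member is `≤` the last element -/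
lemma le_getLast_of_sorted {α : Type*} [LinearOrder α] {L : List α} (hs : L.Pairwise (· < ·))
    {x : α} (hx : x ∈ L) (h : L ≠ []) : x ≤ L.getLast h := by
  induction L with
  | nil => simp at hx
  | cons a t ih =>
    rcases List.pairwise_cons.1 hs with ⟨ha, ht⟩
    rcases List.mem_cons.1 hx with rfl | hx
    · cases t with
      | nil => simp
      | cons b s =>
        rw [List.getLast_cons (by simp)]
        exact le_of_lt (ha _ (List.getLast_mem (by simp)))
    · cases t with
      | nil => simp at hx
      | cons b s =>
        rw [List.getLast_cons (by simp)]
        exact ih ht hx (by simp)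

lemma getLast_rlMaxima (hn : 0 < n) :
    ((rlMaxima π).getLast (rlMaxima_ne_nil π hn) : ℕ) = n - 1 := by
  have hmem := last_mem_rlMaxima π hn
  have h1 := le_getLast_of_sorted (rlMaxima_sorted π) hmem (rlMaxima_ne_nil π hn)
  have h2 := ((rlMaxima π).getLast (rlMaxima_ne_nil π hn)).isLt
  rw [Fin.le_def] at h1
  simp at h1 ⊢
  omega

/-- the head of `rlMaxima π` is the position of the maximal value `n-1`. -/
lemma head_rlMaxima_val (hn : 0 < n) (hne : rlMaxima π ≠ []) :
    (π ((rlMaxima π).head hne) : ℕ) = n - 1 := by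
  set p : Fin n := π.symm ⟨n-1, by omega⟩ with hp
  have hpval : (π p : ℕ) = n - 1 := by simp [hp]
  have hpmem : p ∈ rlMaxima π := by
    rw [mem_rlMaxima_iff]
    intro j hj
    have hne' : π j ≠ π p := fun h => absurd (π.injective h) (ne_of_gt hj)
    rw [Fin.lt_def]
    have h3 := (π j).isLt
    have : (π j : ℕ) ≠ n - 1 := fun h => hne' (Fin.ext (by rw [h, hpval]))
    omega
  obtain ⟨x, t, hxt⟩ := List.exists_cons_of_ne_nil hne
  have hsorted := rlMaxima_sorted π
  have hhead : (rlMaxima π).head hne = x := by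
    have h0 : some ((rlMaxima π).head hne) = some x := by
      rw [← List.head?_eq_head hne, hxt]; rfl
    exact Option.some_injective _ h0
  rw [hxt] at hsorted hpmem
  rw [hhead]
  rcases List.mem_cons.1 hpmem with rfl | hpm
  · exact hpval
  · have hx : x ∈ rlMaxima π := by rw [hxt]; simp
    rw [mem_rlMaxima_iff] at hx
    have hlt : x < p := (List.pairwise_cons.1 hsorted).1 p hpm
    have h4 := hx p hlt
    rw [Fin.lt_def] at h4
    have h5 := (π x).isLt
    omega

lemma rlMaxima_of_zero (π : Equiv.Perm (Fin 0)) : rlMaxima π = [] := by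
  rcases h : rlMaxima π with _ | ⟨x, t⟩
  · rfl
  · exact absurd x.isLt (by omega)

lemma phi_of_zero (π : Equiv.Perm (Fin 0)) : phi π = [] := by
  unfold phi
  rw [rlMaxima_of_zero]

end StmtAux
namespace StmtAux
open List Equiv

variable {α β : Type*}

def block (f g : α → ℕ) (x y : α) : List Bool :=
  List.replicate (f x - f y) false ++ List.replicate (g y - g x) true

def blocksF (f g : α → ℕ) : List α → List Bool
  | [] => []
  | [_] => []
  | x :: y :: t => block f g x y ++ blocksF f g (y :: t)

lemma blocksF_eq_flatMap (f g : α → ℕ) (L : List α) :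
    blocksF f g L = (L.zip L.tail).flatMap fun p =>
      List.replicate (f p.1 - f p.2) false ++ List.replicate (g p.2 - g p.1) true := by
  induction L with
  | nil => rfl
  | cons x t ih =>
    cases t with
    | nil => rfl
    | cons y s =>
      simp only [blocksF, ih, List.tail_cons, List.zip_cons_cons, List.flatMap_cons]
      rfl

lemma blocksF_append (f g : α → ℕ) (L₁ L₂ : List α) (h₁ : L₁ ≠ []) (h₂ : L₂ ≠ []) :
    blocksF f g (L₁ ++ L₂) =
      blocksF f g L₁ ++ block f g (L₁.getLast h₁) (L₂.head h₂) ++ blocksF f g L₂ := by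
  induction L₁ with
  | nil => exact absurd rfl h₁
  | cons x t ih =>
    cases t with
    | nil =>
      obtain ⟨y, s, rfl⟩ := List.exists_cons_of_ne_nil h₂
      simp [blocksF]
    | cons x' t' =>
      have h₁' : x' :: t' ≠ [] := by simp
      have : (x :: x' :: t') ++ L₂ = x :: x' :: (t' ++ L₂) := by simp
      rw [this]
      have h2 : blocksF f g (x :: x' :: (t' ++ L₂)) =
          block f g x x' ++ blocksF f g (x' :: (t' ++ L₂)) := rfl
      rw [h2]
      have h3 : x' :: (t' ++ L₂) = (x' :: t') ++ L₂ := by simp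
      rw [h3, ih h₁']
      have h4 : (x :: x' :: t').getLast (by simp) = (x' :: t').getLast h₁' :=
        List.getLast_cons h₁'
      rw [h4]
      simp [blocksF]

lemma blocksF_map (f g : α → ℕ) (f' g' : β → ℕ) (e : β → α) (c d : ℕ)
    (hf : ∀ i, f (e i) = c + f' i) (hg : ∀ i, g (e i) = d + g' i) (L : List β) :
    blocksF f g (L.map e) = blocksF f' g' L := by
  induction L with
  | nil => rfl
  | cons x t ih =>
    cases t with
    | nil => rfl
    | cons y s =>
      simp only [List.map_cons] at ih ⊢
      show block f g (e x) (e y) ++ _ = block f' g' x y ++ _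
      rw [ih]
      congr 1
      unfold block
      rw [hf x, hf y, hg x, hg y]
      congr 2 <;> omega

lemma getLastD_eq_getLast (x : α) (rest : List α) :
    rest.getLastD x = (x :: rest).getLast (List.cons_ne_nil x rest) := by
  cases rest with
  | nil => rfl
  | cons b s =>
    rw [List.getLast_cons (by simp)]
    simp [List.getLastD_eq_getLast?, List.getLast?_eq_getLast]

lemma phi_eq {n : ℕ} (π : Equiv.Perm (Fin n)) {x : Fin n} {rest : List (Fin n)}
    (hL : rlMaxima π = x :: rest) :
    phi π = List.replicate ((x : ℕ) + 1) true ++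
      blocksF (fun i => (π i : ℕ)) (fun i => (i : ℕ)) (x :: rest) ++
      List.replicate ((π ((x :: rest).getLast (List.cons_ne_nil x rest)) : ℕ) + 1) false := by
  unfold phi
  rw [hL]
  dsimp only
  rw [blocksF_eq_flatMap, getLastD_eq_getLast]
  rfl

end StmtAux
namespace StmtAux
open List Equiv

variable {a b n : ℕ}

def cFun (h : a + b + 1 = n) (π₁ : Equiv.Perm (Fin a)) (π₂ : Equiv.Perm (Fin b)) :
    Fin n → Fin n := fun k =>
  if _ : (k : ℕ) = 0 then ⟨b, by omega⟩
  else if hk : (k : ℕ) ≤ a then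
    ⟨b + 1 + (π₁ ⟨(k : ℕ) - 1, by omega⟩ : ℕ), by
      have := (π₁ ⟨(k : ℕ) - 1, by omega⟩).isLt; omega⟩
  else
    ⟨(π₂ ⟨(k : ℕ) - 1 - a, by have := k.isLt; omega⟩ : ℕ), by
      have := (π₂ ⟨(k : ℕ) - 1 - a, by have := k.isLt; omega⟩).isLt; omega⟩

variable (h : a + b + 1 = n) (π₁ : Equiv.Perm (Fin a)) (π₂ : Equiv.Perm (Fin b))

lemma cFun_zero (k : Fin n) (hk : (k : ℕ) = 0) : (cFun h π₁ π₂ k : ℕ) = b := by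
  simp [cFun, hk]

lemma cFun_A (k : Fin n) (hk0 : (k : ℕ) ≠ 0) (hk : (k : ℕ) ≤ a) :
    (cFun h π₁ π₂ k : ℕ) = b + 1 + (π₁ ⟨(k : ℕ) - 1, by omega⟩ : ℕ) := by
  simp [cFun, hk0, hk]

lemma cFun_B (k : Fin n) (hk : a < (k : ℕ)) :
    (cFun h π₁ π₂ k : ℕ) = (π₂ ⟨(k : ℕ) - 1 - a, by have := k.isLt; omega⟩ : ℕ) := by
  have hk0 : (k : ℕ) ≠ 0 := by omega
  have hka : ¬ (k : ℕ) ≤ a := by omega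
  simp [cFun, hk0, hka]

lemma cFun_injective : Function.Injective (cFun h π₁ π₂) := by
  intro k k' hEq
  have hv : (cFun h π₁ π₂ k : ℕ) = (cFun h π₁ π₂ k' : ℕ) := congrArg Fin.val hEq
  have hb1 : ∀ (m : Fin n) (h0 : (m:ℕ) ≠ 0) (h1 : (m:ℕ) ≤ a),
      (π₁ ⟨(m : ℕ) - 1, by omega⟩ : ℕ) < a := fun m h0 h1 => (π₁ _).isLt
  have hb2 : ∀ (m : Fin n) (h1 : a < (m:ℕ)),
      (π₂ ⟨(m : ℕ) - 1 - a, by have := m.isLt; omega⟩ : ℕ) < b := fun m h1 => (π₂ _).isLt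
  apply Fin.ext
  by_cases hk0 : (k : ℕ) = 0 <;> by_cases hk0' : (k' : ℕ) = 0
  · omega
  · rw [cFun_zero h π₁ π₂ k hk0] at hv
    by_cases hka : (k' : ℕ) ≤ a
    · rw [cFun_A h π₁ π₂ k' hk0' hka] at hv; omega
    · rw [cFun_B h π₁ π₂ k' (by omega)] at hv
      have := hb2 k' (by omega); omega
  · rw [cFun_zero h π₁ π₂ k' hk0'] at hv
    by_cases hka : (k : ℕ) ≤ a
    · rw [cFun_A h π₁ π₂ k hk0 hka] at hv; omega
    · rw [cFun_B h π₁ π₂ k (by omega)] at hv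
      have := hb2 k (by omega); omega
  · by_cases hka : (k : ℕ) ≤ a <;> by_cases hka' : (k' : ℕ) ≤ a
    · rw [cFun_A h π₁ π₂ k hk0 hka, cFun_A h π₁ π₂ k' hk0' hka'] at hv
      have : (π₁ ⟨(k : ℕ) - 1, by omega⟩ : ℕ) = (π₁ ⟨(k' : ℕ) - 1, by omega⟩ : ℕ) := by omega
      have := π₁.injective (Fin.ext this)
      have := congrArg Fin.val this
      simp at this
      omega
    · rw [cFun_A h π₁ π₂ k hk0 hka, cFun_B h π₁ π₂ k' (by omega)] at hv
      have := hb2 k' (by omega); omega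
    · rw [cFun_B h π₁ π₂ k (by omega), cFun_A h π₁ π₂ k' hk0' hka'] at hv
      have := hb2 k (by omega); omega
    · rw [cFun_B h π₁ π₂ k (by omega), cFun_B h π₁ π₂ k' (by omega)] at hv
      have := π₂.injective (Fin.ext hv)
      have := congrArg Fin.val this
      simp at this
      omega

noncomputable def compose : Equiv.Perm (Fin n) :=
  Equiv.ofBijective (cFun h π₁ π₂)
    (Finite.injective_iff_bijective.1 (cFun_injective h π₁ π₂))

lemma compose_apply (k : Fin n) : (compose h π₁ π₂) k = cFun h π₁ π₂ k := rfl

def emb1 (i : Fin a) : Fin n := ⟨1 + (i : ℕ), by have := i.isLt; omega⟩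
def emb2 (j : Fin b) : Fin n := ⟨1 + a + (j : ℕ), by have := j.isLt; omega⟩

lemma compose_val_zero (k : Fin n) (hk : (k : ℕ) = 0) : ((compose h π₁ π₂) k : ℕ) = b :=
  cFun_zero h π₁ π₂ k hk

lemma compose_val_emb1 (i : Fin a) :
    ((compose h π₁ π₂) (emb1 h i) : ℕ) = b + 1 + (π₁ i : ℕ) := by
  rw [compose_apply, cFun_A h π₁ π₂ _ (by simp [emb1]) (by simp [emb1]; omega)]
  congr 2
  apply Fin.ext
  simp [emb1]

lemma compose_val_emb2 (j : Fin b) :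
    ((compose h π₁ π₂) (emb2 h j) : ℕ) = (π₂ j : ℕ) := by
  rw [compose_apply, cFun_B h π₁ π₂ _ (by simp [emb2]; omega)]
  congr 2
  apply Fin.ext
  simp [emb2]
  omega

lemma fin_cases_region (k : Fin n) :
    (k : ℕ) = 0 ∨ (∃ i : Fin a, k = emb1 h i) ∨ (∃ j : Fin b, k = emb2 h j) := by
  have hk := k.isLt
  by_cases h0 : (k : ℕ) = 0
  · exact Or.inl h0
  · by_cases ha : (k : ℕ) ≤ a
    · exact Or.inr (Or.inl ⟨⟨(k : ℕ) - 1, by omega⟩, Fin.ext (by simp [emb1]; omega)⟩)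
    · exact Or.inr (Or.inr ⟨⟨(k : ℕ) - 1 - a, by omega⟩, Fin.ext (by simp [emb2]; omega)⟩)

end StmtAux
namespace StmtAux
open List Equiv

variable {a b n : ℕ} (h : a + b + 1 = n) (π₁ : Equiv.Perm (Fin a)) (π₂ : Equiv.Perm (Fin b))

lemma emb1_lt_emb1 {i i' : Fin a} : emb1 h i < emb1 h i' ↔ i < i' := by
  simp only [emb1, Fin.mk_lt_mk, Fin.lt_def]
  omega

lemma emb2_lt_emb2 {j j' : Fin b} : emb2 h j < emb2 h j' ↔ j < j' := by
  simp only [emb2, Fin.mk_lt_mk, Fin.lt_def]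
  omega

lemma emb1_lt_emb2 (i : Fin a) (j : Fin b) : emb1 h i < emb2 h j := by
  have := i.isLt
  simp only [emb1, emb2, Fin.mk_lt_mk]
  omega

lemma isRLMax_emb1_iff (i : Fin a) :
    (∀ j, emb1 h i < j → (compose h π₁ π₂) j < (compose h π₁ π₂) (emb1 h i)) ↔
      (∀ j, i < j → π₁ j < π₁ i) := by
  constructor
  · intro H j hj
    have := H (emb1 h j) ((emb1_lt_emb1 h).2 hj)
    rw [Fin.lt_def, compose_val_emb1, compose_val_emb1] at this
    rw [Fin.lt_def]; omega
  · intro H j hj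
    rcases fin_cases_region h j with h0 | ⟨i', rfl⟩ | ⟨j', rfl⟩
    · exfalso
      rw [Fin.lt_def] at hj
      simp [emb1] at hj
      omega
    · have hii : i < i' := (emb1_lt_emb1 h).1 hj
      have := H i' hii
      rw [Fin.lt_def, compose_val_emb1, compose_val_emb1]
      rw [Fin.lt_def] at this
      omega
    · rw [Fin.lt_def, compose_val_emb1, compose_val_emb2]
      have := (π₂ j').isLt
      omega

lemma isRLMax_emb2_iff (j : Fin b) :
    (∀ k, emb2 h j < k → (compose h π₁ π₂) k < (compose h π₁ π₂) (emb2 h j)) ↔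
      (∀ k, j < k → π₂ k < π₂ j) := by
  constructor
  · intro H k hk
    have := H (emb2 h k) ((emb2_lt_emb2 h).2 hk)
    rw [Fin.lt_def, compose_val_emb2, compose_val_emb2] at this
    rw [Fin.lt_def]; omega
  · intro H k hk
    rcases fin_cases_region h k with h0 | ⟨i', rfl⟩ | ⟨j', rfl⟩
    · exfalso
      rw [Fin.lt_def] at hk
      simp [emb2] at hk
      omega
    · exfalso
      rw [Fin.lt_def] at hk
      have := i'.isLt
      simp [emb1, emb2] at hk
      omega
    · have hjj : j < j' := (emb2_lt_emb2 h).1 hk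
      have := H j' hjj
      rw [Fin.lt_def, compose_val_emb2, compose_val_emb2]
      rw [Fin.lt_def] at this
      omega

lemma isRLMax_zero_iff :
    (∀ j, (⟨0, by omega⟩ : Fin n) < j →
      (compose h π₁ π₂) j < (compose h π₁ π₂) ⟨0, by omega⟩) ↔ a = 0 := by
  constructor
  · intro H
    by_contra ha
    have ha' : 0 < a := Nat.pos_of_ne_zero ha
    have := H (emb1 h ⟨0, ha'⟩) (by simp [emb1, Fin.lt_def])
    rw [Fin.lt_def, compose_val_emb1, compose_val_zero h π₁ π₂ _ rfl] at this
    omega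
  · intro ha j hj
    rcases fin_cases_region h j with h0 | ⟨i', rfl⟩ | ⟨j', rfl⟩
    · exfalso; rw [Fin.lt_def] at hj; omega
    · exact absurd i'.isLt (by omega)
    · rw [Fin.lt_def, compose_val_emb2, compose_val_zero h π₁ π₂ _ rfl]
      exact (π₂ j').isLt

lemma sorted_target :
    ((rlMaxima π₁).map (emb1 h) ++ (rlMaxima π₂).map (emb2 h)).Pairwise (· < ·) := by
  rw [List.pairwise_append]
  refine ⟨List.Pairwise.map _ (fun x y hxy => (emb1_lt_emb1 h).2 hxy) (rlMaxima_sorted π₁),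
    List.Pairwise.map _ (fun x y hxy => (emb2_lt_emb2 h).2 hxy) (rlMaxima_sorted π₂), ?_⟩
  intro x hx y hy
  rcases List.mem_map.1 hx with ⟨i, _, rfl⟩
  rcases List.mem_map.1 hy with ⟨j, _, rfl⟩
  exact emb1_lt_emb2 h i j

lemma rlMaxima_compose_pos (ha : 0 < a) :
    rlMaxima (compose h π₁ π₂) =
      (rlMaxima π₁).map (emb1 h) ++ (rlMaxima π₂).map (emb2 h) := by
  apply rlMaxima_eq_of _ (sorted_target h π₁ π₂)
  intro i
  rw [List.mem_append, List.mem_map, List.mem_map]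
  rcases fin_cases_region h i with h0 | ⟨i0, rfl⟩ | ⟨j0, rfl⟩
  · constructor
    · rintro (⟨x, _, hx⟩ | ⟨x, _, hx⟩)
      · exact absurd (congrArg Fin.val hx) (by simp [emb1]; omega)
      · exact absurd (congrArg Fin.val hx) (by simp [emb2]; omega)
    · intro H
      exfalso
      have hi : i = (⟨0, by omega⟩ : Fin n) := Fin.ext h0
      rw [hi] at H
      exact absurd ((isRLMax_zero_iff h π₁ π₂).1 H) (by omega)
  · rw [isRLMax_emb1_iff]
    constructor
    · rintro (⟨x, hx, hxe⟩ | ⟨x, _, hxe⟩)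
      · have : x = i0 := by
          have := congrArg Fin.val hxe
          simp [emb1] at this
          exact Fin.ext this
        rw [← mem_rlMaxima_iff]
        rwa [this] at hx
      · exact absurd (congrArg Fin.val hxe) (by
          have := x.isLt; have := i0.isLt; simp [emb1, emb2]; omega)
    · intro H
      exact Or.inl ⟨i0, (mem_rlMaxima_iff π₁).2 H, rfl⟩
  · rw [isRLMax_emb2_iff]
    constructor
    · rintro (⟨x, _, hxe⟩ | ⟨x, hx, hxe⟩)
      · exact absurd (congrArg Fin.val hxe) (by
          have := x.isLt; have := j0.isLt; simp [emb1, emb2]; omega)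
      · have : x = j0 := by
          have := congrArg Fin.val hxe
          simp [emb2] at this
          exact Fin.ext this
        rw [← mem_rlMaxima_iff]
        rwa [this] at hx
    · intro H
      exact Or.inr ⟨j0, (mem_rlMaxima_iff π₂).2 H, rfl⟩

lemma rlMaxima_compose_zero (ha : a = 0) :
    rlMaxima (compose h π₁ π₂) =
      (⟨0, by omega⟩ : Fin n) :: (rlMaxima π₂).map (emb2 h) := by
  apply rlMaxima_eq_of
  · rw [List.pairwise_cons]
    refine ⟨?_, List.Pairwise.map _ (fun x y hxy => (emb2_lt_emb2 h).2 hxy) (rlMaxima_sorted π₂)⟩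
    intro y hy
    rcases List.mem_map.1 hy with ⟨j, _, rfl⟩
    simp [emb2, Fin.lt_def]
  · intro i
    rw [List.mem_cons, List.mem_map]
    rcases fin_cases_region h i with h0 | ⟨i0, rfl⟩ | ⟨j0, rfl⟩
    · rcases i with ⟨iv, hiv⟩
      simp only [Fin.val_mk] at h0
      subst h0
      rw [isRLMax_zero_iff]
      simp [ha, Fin.ext_iff]
    · exact absurd i0.isLt (by omega)
    · rw [isRLMax_emb2_iff]
      constructor
      · rintro (hx | ⟨x, hx, hxe⟩)
        · exact absurd (congrArg Fin.val hx) (by simp [emb2])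
        · have : x = j0 := by
            have := congrArg Fin.val hxe
            simp [emb2] at this
            exact Fin.ext this
          rw [← mem_rlMaxima_iff]
          rwa [this] at hx
      · intro H
        exact Or.inr ⟨j0, (mem_rlMaxima_iff π₂).2 H, rfl⟩

end StmtAux
namespace StmtAux
open List Equiv

lemma head_eq_of_eq_cons {α : Type*} {L : List α} {x : α} {t : List α}
    (e : L = x :: t) (hne : L ≠ []) : L.head hne = x := by subst e; rfl

lemma getLast_eq_of_eq {α : Type*} {L L' : List α} (e : L = L') (hne : L ≠ [])
    (hne' : L' ≠ []) : L.getLast hne = L'.getLast hne' := by subst e; rfl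

@[simp] lemma blocksF_nil {α : Type*} (f g : α → ℕ) : blocksF f g [] = [] := rfl

@[simp] lemma blocksF_singleton {α : Type*} (f g : α → ℕ) (x : α) : blocksF f g [x] = [] := rfl

lemma block_eq {α : Type*} (f g : α → ℕ) (x y : α) {u v : ℕ}
    (hu : f x - f y = u) (hv : g y - g x = v) :
    block f g x y = List.replicate u false ++ List.replicate v true := by
  subst hu; subst hv; rfl

variable {n : ℕ} (π : Equiv.Perm (Fin n))

lemma rlMaxima_eq_nil (hn : n = 0) : rlMaxima π = [] := by
  rcases h : rlMaxima π with _ | ⟨x, t⟩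
  · rfl
  · exact absurd x.isLt (by omega)

lemma phi_eq_nil (hn : n = 0) : phi π = [] := by
  unfold phi
  rw [rlMaxima_eq_nil π hn]

lemma phi_eq' {L : List (Fin n)} (hL : rlMaxima π = L) (hne : L ≠ []) :
    phi π = List.replicate ((L.head hne : ℕ) + 1) true ++
      blocksF (fun i => (π i : ℕ)) (fun i => (i : ℕ)) L ++
      List.replicate ((π (L.getLast hne) : ℕ) + 1) false := by
  obtain ⟨x, rest, rfl⟩ := List.exists_cons_of_ne_nil hne
  exact phi_eq π hL

lemma head_rlMaxima_val' (hn : 0 < n) {x : Fin n} {rest : List (Fin n)}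
    (hL : rlMaxima π = x :: rest) : (π x : ℕ) = n - 1 := by
  have hne := rlMaxima_ne_nil π hn
  have hx : (rlMaxima π).head hne = x := head_eq_of_eq_cons hL hne
  rw [← hx]
  exact head_rlMaxima_val π hn hne

lemma getLast_rlMaxima' (hn : 0 < n) {L : List (Fin n)} (hL : rlMaxima π = L) (hne : L ≠ []) :
    ((L.getLast hne : Fin n) : ℕ) = n - 1 := by
  have hne' := rlMaxima_ne_nil π hn
  rw [← getLast_eq_of_eq hL hne' hne]
  exact getLast_rlMaxima π hn

variable {a b : ℕ} (h : a + b + 1 = n) (π₁ : Equiv.Perm (Fin a)) (π₂ : Equiv.Perm (Fin b))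

lemma phi_compose : phi (compose h π₁ π₂) = true :: (phi π₁ ++ false :: phi π₂) := by
  classical
  have hmap1 : ∀ L : List (Fin a),
      blocksF (fun i => ((compose h π₁ π₂) i : ℕ)) (fun i => (i : ℕ)) (L.map (emb1 h)) =
        blocksF (fun i => (π₁ i : ℕ)) (fun i => (i : ℕ)) L := by
    intro L
    apply blocksF_map _ _ _ _ (emb1 h) (b+1) 1
    · intro i; rw [compose_val_emb1]
    · intro i; simp [emb1]
  have hmap2 : ∀ L : List (Fin b),
      blocksF (fun i => ((compose h π₁ π₂) i : ℕ)) (fun i => (i : ℕ)) (L.map (emb2 h)) =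
        blocksF (fun j => (π₂ j : ℕ)) (fun j => (j : ℕ)) L := by
    intro L
    apply blocksF_map _ _ _ _ (emb2 h) 0 (1+a)
    · intro j; rw [compose_val_emb2]; omega
    · intro j; simp [emb2]
  rcases Nat.eq_zero_or_pos a with ha | ha
  · have hπ₁ : phi π₁ = [] := phi_eq_nil π₁ ha
    rcases Nat.eq_zero_or_pos b with hb | hb
    · have hL : rlMaxima (compose h π₁ π₂) = [⟨0, by omega⟩] := by
        rw [rlMaxima_compose_zero h π₁ π₂ ha, rlMaxima_eq_nil π₂ hb]
        rfl
      rw [phi_eq' _ hL (by simp)]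
      have hgl : ([(⟨0, by omega⟩ : Fin n)]).getLast (by simp) = ⟨0, by omega⟩ := rfl
      rw [hgl, compose_val_zero h π₁ π₂ _ rfl]
      rw [hπ₁, phi_eq_nil π₂ hb]
      have hb1 : b + 1 = 1 := by omega
      rw [hb1]
      rfl
    · have hM₂ := rlMaxima_ne_nil π₂ hb
      obtain ⟨h₂, r₂, hM2⟩ := List.exists_cons_of_ne_nil hM₂
      have hmapne : (rlMaxima π₂).map (emb2 h) ≠ [] := by simp [hM₂]
      have hL : rlMaxima (compose h π₁ π₂) =
          (⟨0, by omega⟩ : Fin n) :: (rlMaxima π₂).map (emb2 h) :=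
        rlMaxima_compose_zero h π₁ π₂ ha
      have hne : ((⟨0, by omega⟩ : Fin n) :: (rlMaxima π₂).map (emb2 h)) ≠ [] := by simp
      rw [phi_eq' _ hL hne]
      have hh : ((⟨0, by omega⟩ : Fin n) :: (rlMaxima π₂).map (emb2 h)).head hne =
          ⟨0, by omega⟩ := rfl
      rw [hh]
      -- blocksF computation
      have hb2 := blocksF_append (fun i => ((compose h π₁ π₂) i : ℕ)) (fun i => (i : ℕ))
        [(⟨0, by omega⟩ : Fin n)] ((rlMaxima π₂).map (emb2 h)) (by simp) hmapne
      rw [List.singleton_append] at hb2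
      rw [hb2, hmap2]
      have hheadm2 : ((rlMaxima π₂).map (emb2 h)).head hmapne = emb2 h h₂ :=
        head_eq_of_eq_cons (by rw [hM2]; rfl) hmapne
      rw [hheadm2]
      have hglz : ([(⟨0, by omega⟩ : Fin n)]).getLast (by simp) = ⟨0, by omega⟩ := rfl
      rw [hglz]
      have hblock : block (fun i => ((compose h π₁ π₂) i : ℕ)) (fun i => (i : ℕ))
            (⟨0, by omega⟩ : Fin n) (emb2 h h₂) =
          List.replicate 1 false ++ List.replicate ((h₂ : ℕ) + 1) true := by
        apply block_eq
        · show ((compose h π₁ π₂) ⟨0, by omega⟩ : ℕ) - ((compose h π₁ π₂) (emb2 h h₂) : ℕ) = 1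
          rw [compose_val_zero h π₁ π₂ _ rfl, compose_val_emb2,
            head_rlMaxima_val' π₂ hb hM2]
          omega
        · show 1 + a + (h₂ : ℕ) - 0 = (h₂ : ℕ) + 1
          omega
      rw [hblock]
      -- getLast
      have hgl : ((⟨0, by omega⟩ : Fin n) :: (rlMaxima π₂).map (emb2 h)).getLast hne =
          emb2 h ((rlMaxima π₂).getLast hM₂) := by
        rw [List.getLast_cons hmapne]
        exact List.getLast_map _
      rw [hgl, compose_val_emb2]
      -- phi π₂
      rw [phi_eq' π₂ rfl hM₂, hπ₁]
      have hh2 : (rlMaxima π₂).head hM₂ = h₂ := head_eq_of_eq_cons hM2 hM₂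
      rw [hh2]
      simp
  · -- a > 0
    have hM₁ := rlMaxima_ne_nil π₁ ha
    obtain ⟨x₁, r₁, hM1⟩ := List.exists_cons_of_ne_nil hM₁
    have hmap1ne : (rlMaxima π₁).map (emb1 h) ≠ [] := by simp [hM₁]
    have hl1 : ((rlMaxima π₁).getLast hM₁ : ℕ) = a - 1 :=
      getLast_rlMaxima' π₁ ha rfl hM₁
    have hh1 : (rlMaxima π₁).head hM₁ = x₁ := head_eq_of_eq_cons hM1 hM₁
    have hheadmap1 : ((rlMaxima π₁).map (emb1 h)).head hmap1ne = emb1 h x₁ :=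
      head_eq_of_eq_cons (by rw [hM1]; rfl) hmap1ne
    have hlastmap1 : ((rlMaxima π₁).map (emb1 h)).getLast hmap1ne =
        emb1 h ((rlMaxima π₁).getLast hM₁) := List.getLast_map _
    rcases Nat.eq_zero_or_pos b with hb | hb
    · have hπ₂ : phi π₂ = [] := phi_eq_nil π₂ hb
      have hL : rlMaxima (compose h π₁ π₂) = (rlMaxima π₁).map (emb1 h) := by
        rw [rlMaxima_compose_pos h π₁ π₂ ha, rlMaxima_eq_nil π₂ hb]
        simp
      rw [phi_eq' _ hL hmap1ne, hmap1, hheadmap1, hlastmap1]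
      have hval : ((compose h π₁ π₂) (emb1 h ((rlMaxima π₁).getLast hM₁)) : ℕ) =
          ((π₁ ((rlMaxima π₁).getLast hM₁) : ℕ) + 1) := by
        rw [compose_val_emb1]; omega
      rw [hval]
      rw [phi_eq' π₁ rfl hM₁, hπ₂, hh1]
      have e5 : (emb1 h x₁ : ℕ) + 1 = ((x₁ : ℕ) + 1) + 1 := by
        show 1 + (x₁ : ℕ) + 1 = ((x₁ : ℕ) + 1) + 1
        omega
      rw [e5, List.replicate_succ]
      rw [List.replicate_succ' (n := (π₁ ((rlMaxima π₁).getLast hM₁) : ℕ) + 1) (a := false)]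
      simp
    · -- a > 0, b > 0
      have hM₂ := rlMaxima_ne_nil π₂ hb
      obtain ⟨h₂, r₂, hM2⟩ := List.exists_cons_of_ne_nil hM₂
      have hmap2ne : (rlMaxima π₂).map (emb2 h) ≠ [] := by simp [hM₂]
      have hh2 : (rlMaxima π₂).head hM₂ = h₂ := head_eq_of_eq_cons hM2 hM₂
      have hL : rlMaxima (compose h π₁ π₂) =
          (rlMaxima π₁).map (emb1 h) ++ (rlMaxima π₂).map (emb2 h) :=
        rlMaxima_compose_pos h π₁ π₂ ha
      have hne : (rlMaxima π₁).map (emb1 h) ++ (rlMaxima π₂).map (emb2 h) ≠ [] := by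
        simp [hM₁]
      rw [phi_eq' _ hL hne]
      have hhead : ((((rlMaxima π₁).map (emb1 h)) ++ ((rlMaxima π₂).map (emb2 h))).head hne) =
          emb1 h x₁ := by
        rw [List.head_append_of_ne_nil hmap1ne, hheadmap1]
      rw [hhead]
      have hgetLast : (((rlMaxima π₁).map (emb1 h)) ++ ((rlMaxima π₂).map (emb2 h))).getLast hne =
          emb2 h ((rlMaxima π₂).getLast hM₂) := by
        rw [List.getLast_append_of_ne_nil _ hmap2ne]
        exact List.getLast_map _
      rw [hgetLast, compose_val_emb2]
      rw [blocksF_append _ _ _ _ hmap1ne hmap2ne, hmap1, hmap2]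
      have hheadm2 : ((rlMaxima π₂).map (emb2 h)).head hmap2ne = emb2 h h₂ :=
        head_eq_of_eq_cons (by rw [hM2]; rfl) hmap2ne
      rw [hheadm2, hlastmap1]
      have hblock : block (fun i => ((compose h π₁ π₂) i : ℕ)) (fun i => (i : ℕ))
            (emb1 h ((rlMaxima π₁).getLast hM₁)) (emb2 h h₂) =
          List.replicate (((π₁ ((rlMaxima π₁).getLast hM₁) : ℕ) + 1) + 1) false ++
            List.replicate ((h₂ : ℕ) + 1) true := by
        apply block_eq
        · show ((compose h π₁ π₂) (emb1 h ((rlMaxima π₁).getLast hM₁)) : ℕ) -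
              ((compose h π₁ π₂) (emb2 h h₂) : ℕ) = ((π₁ ((rlMaxima π₁).getLast hM₁) : ℕ) + 1) + 1
          rw [compose_val_emb1, compose_val_emb2, head_rlMaxima_val' π₂ hb hM2]
          omega
        · show 1 + a + (h₂ : ℕ) - (1 + ((rlMaxima π₁).getLast hM₁ : ℕ)) = (h₂ : ℕ) + 1
          rw [hl1]
          omega
      rw [hblock]
      rw [List.replicate_succ' (n := (π₁ ((rlMaxima π₁).getLast hM₁) : ℕ) + 1) (a := false)]
      rw [phi_eq' π₁ rfl hM₁, phi_eq' π₂ rfl hM₂, hh1, hh2]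
      have e5 : (emb1 h x₁ : ℕ) + 1 = ((x₁ : ℕ) + 1) + 1 := by
        show 1 + (x₁ : ℕ) + 1 = ((x₁ : ℕ) + 1) + 1
        omega
      rw [e5, List.replicate_succ]
      simp

end StmtAux
namespace StmtAux
open List Equiv

variable {a b n : ℕ} (h : a + b + 1 = n) (π₁ : Equiv.Perm (Fin a)) (π₂ : Equiv.Perm (Fin b))

lemma contains_compose_iff :
    Contains213 (compose h π₁ π₂) ↔ Contains213 π₁ ∨ Contains213 π₂ := by
  constructor
  · rintro ⟨i, j, k, hij, hjk, hji, hik⟩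
    rw [Fin.lt_def] at hij hjk hji hik
    rcases fin_cases_region h i with hi0 | ⟨i', rfl⟩ | ⟨i', rfl⟩
    · -- i at position 0, value b; j must be in B, k in A: impossible order
      have hival : ((compose h π₁ π₂) i : ℕ) = b := compose_val_zero h π₁ π₂ i hi0
      rcases fin_cases_region h j with hj0 | ⟨j', rfl⟩ | ⟨j', rfl⟩
      · omega
      · rw [hival, compose_val_emb1] at hji; omega
      · rw [hival, compose_val_emb2] at hji
        rcases fin_cases_region h k with hk0 | ⟨k', rfl⟩ | ⟨k', rfl⟩
        · simp [emb2] at hjk; omega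
        · exfalso
          have := k'.isLt
          simp [emb1, emb2] at hjk
          omega
        · rw [hival, compose_val_emb2] at hik
          have := (π₂ k').isLt
          omega
    · -- i in A
      have hival : ((compose h π₁ π₂) (emb1 h i') : ℕ) = b + 1 + (π₁ i' : ℕ) :=
        compose_val_emb1 h π₁ π₂ i'
      rcases fin_cases_region h k with hk0 | ⟨k', rfl⟩ | ⟨k', rfl⟩
      · omega
      · -- k in A; now j
        rcases fin_cases_region h j with hj0 | ⟨j', rfl⟩ | ⟨j', rfl⟩
        · simp [emb1] at hij; omega
        · left
          refine ⟨i', j', k', ?_, ?_, ?_, ?_⟩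
          · rw [Fin.lt_def]; simp [emb1] at hij; omega
          · rw [Fin.lt_def]; simp [emb1] at hjk; omega
          · rw [hival, compose_val_emb1] at hji
            rw [Fin.lt_def]; omega
          · rw [hival, compose_val_emb1] at hik
            rw [Fin.lt_def]; omega
        · exfalso
          have := k'.isLt
          simp [emb1, emb2] at hjk
          omega
      · rw [hival, compose_val_emb2] at hik
        have := (π₂ k').isLt
        omega
    · -- i in B: j, k must be in B
      have hival : ((compose h π₁ π₂) (emb2 h i') : ℕ) = (π₂ i' : ℕ) :=
        compose_val_emb2 h π₁ π₂ i'
      rcases fin_cases_region h j with hj0 | ⟨j', rfl⟩ | ⟨j', rfl⟩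
      · simp [emb2] at hij; omega
      · exfalso
        have := j'.isLt
        simp [emb1, emb2] at hij
        omega
      · rcases fin_cases_region h k with hk0 | ⟨k', rfl⟩ | ⟨k', rfl⟩
        · simp [emb2] at hjk; omega
        · exfalso
          have := k'.isLt
          simp [emb1, emb2] at hjk
          omega
        · right
          refine ⟨i', j', k', ?_, ?_, ?_, ?_⟩
          · rw [Fin.lt_def]; simp [emb2] at hij; omega
          · rw [Fin.lt_def]; simp [emb2] at hjk; omega
          · rw [hival, compose_val_emb2] at hji
            rw [Fin.lt_def]; omega
          · rw [hival, compose_val_emb2] at hik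
            rw [Fin.lt_def]; omega
  · rintro (⟨i, j, k, hij, hjk, hji, hik⟩ | ⟨i, j, k, hij, hjk, hji, hik⟩)
    · refine ⟨emb1 h i, emb1 h j, emb1 h k, (emb1_lt_emb1 h).2 hij, (emb1_lt_emb1 h).2 hjk, ?_, ?_⟩
      · rw [Fin.lt_def, compose_val_emb1, compose_val_emb1]
        rw [Fin.lt_def] at hji; omega
      · rw [Fin.lt_def, compose_val_emb1, compose_val_emb1]
        rw [Fin.lt_def] at hik; omega
    · refine ⟨emb2 h i, emb2 h j, emb2 h k, (emb2_lt_emb2 h).2 hij, (emb2_lt_emb2 h).2 hjk, ?_, ?_⟩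
      · rw [Fin.lt_def, compose_val_emb2, compose_val_emb2]
        rw [Fin.lt_def] at hji; omega
      · rw [Fin.lt_def, compose_val_emb2, compose_val_emb2]
        rw [Fin.lt_def] at hik; omega

end StmtAux
namespace StmtAux
open List Equiv

lemma exists_decomp {n : ℕ} (π : Equiv.Perm (Fin n)) (hn : 0 < n) (hπ : ¬ Contains213 π) :
    ∃ (a b : ℕ) (h : a + b + 1 = n) (π₁ : Equiv.Perm (Fin a)) (π₂ : Equiv.Perm (Fin b)),
      π = compose h π₁ π₂ := by
  classical
  set z : Fin n := ⟨0, hn⟩ with hz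
  set c : ℕ := (π z : ℕ) with hc
  have hcn : c < n := (π z).isLt
  refine ⟨n - 1 - c, c, by omega, ?_⟩
  set a : ℕ := n - 1 - c with hadef
  have h : a + c + 1 = n := by omega
  -- the set of positions with value > c
  set S : Finset (Fin n) := Finset.univ.filter (fun q => c < (π q : ℕ)) with hS
  have hScard : S.card = a := by
    have : S.card = (Finset.Ico (c+1) n).card := by
      apply Finset.card_bij (fun q _ => (π q : ℕ))
      · intro q hq
        rw [hS, Finset.mem_filter] at hq
        rw [Finset.mem_Ico]
        exact ⟨by omega, (π q).isLt⟩
      · intro q hq q' hq' hqq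
        exact π.injective (Fin.ext hqq)
      · intro v hv
        rw [Finset.mem_Ico] at hv
        refine ⟨π.symm ⟨v, by omega⟩, ?_, by simp⟩
        rw [hS, Finset.mem_filter]
        simp
        omega
    rw [this, Nat.card_Ico]
    omega
  -- positions 1..a have values > c
  have step1 : ∀ p : Fin n, 1 ≤ (p : ℕ) → (p : ℕ) ≤ a → c < (π p : ℕ) := by
    intro p hp1 hpa
    by_contra hcon
    push_neg at hcon
    have hpz : p ≠ z := by
      intro e; rw [e] at hp1; simp [hz] at hp1
    have hne : (π p : ℕ) ≠ c := fun e => hpz (π.injective (Fin.ext (by rw [e, hc])))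
    have hlt : (π p : ℕ) < c := by omega
    -- every element of S has position < p and ≠ 0
    have hsub : ∀ q ∈ S, 0 < (q : ℕ) ∧ (q : ℕ) < (p : ℕ) := by
      intro q hq
      rw [hS, Finset.mem_filter] at hq
      have hq2 := hq.2
      have hqz : q ≠ z := by
        intro e; rw [e] at hq2; omega
      have hqz' : 0 < (q : ℕ) := by
        rcases Nat.eq_zero_or_pos (q : ℕ) with h0 | h0
        · exact absurd (Fin.ext h0 : q = z) hqz
        · exact h0
      refine ⟨hqz', ?_⟩
      by_contra hge
      push_neg at hge
      have hqp : q ≠ p := by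
        intro e; rw [e] at hq2; omega
      have hpq : (p : ℕ) < (q : ℕ) := by
        rcases lt_or_eq_of_le hge with h1 | h1
        · exact h1
        · exact absurd (Fin.ext h1.symm : q = p) hqp
      exact hπ ⟨z, p, q, by rw [Fin.lt_def]; simp [hz]; omega,
        by rw [Fin.lt_def]; exact hpq,
        by rw [Fin.lt_def]; exact hlt,
        by rw [Fin.lt_def]; exact hq2⟩
    have hcard : S.card ≤ ((p : ℕ) - 1) := by
      have : S.card = (S.image (fun q : Fin n => (q : ℕ))).card := by
        rw [Finset.card_image_of_injective _ Fin.val_injective]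
      rw [this]
      have hsub2 : S.image (fun q : Fin n => (q : ℕ)) ⊆ Finset.Ioo 0 (p : ℕ) := by
        intro v hv
        rw [Finset.mem_image] at hv
        obtain ⟨q, hq, rfl⟩ := hv
        rw [Finset.mem_Ioo]
        exact (hsub q hq)
      calc (S.image _).card ≤ (Finset.Ioo 0 (p : ℕ)).card := Finset.card_le_card hsub2
        _ = (p : ℕ) - 1 := by rw [Nat.card_Ioo]; omega
    omega
  -- positions > a have values < c
  have step2 : ∀ p : Fin n, a < (p : ℕ) → (π p : ℕ) < c := by
    intro p hpa
    by_contra hcon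
    push_neg at hcon
    have hpz : p ≠ z := by
      intro e
      rw [e] at hpa; simp [hz] at hpa
    have hne : (π p : ℕ) ≠ c := fun e => hpz (π.injective (Fin.ext (by rw [e, hc])))
    have hpS : p ∈ S := by
      rw [hS, Finset.mem_filter]
      exact ⟨Finset.mem_univ _, by omega⟩
    set T : Finset (Fin n) := Finset.univ.filter (fun q => 1 ≤ (q : ℕ) ∧ (q : ℕ) ≤ a) with hT
    have hTS : T ⊆ S := by
      intro q hq
      rw [hT, Finset.mem_filter] at hq
      rw [hS, Finset.mem_filter]
      exact ⟨Finset.mem_univ _, step1 q hq.2.1 hq.2.2⟩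
    have hpT : p ∉ T := by
      rw [hT, Finset.mem_filter]
      push_neg
      intro _ _
      omega
    have hTcard : T.card = a := by
      have h1 : T.card = (T.image (fun q : Fin n => (q : ℕ))).card := by
        rw [Finset.card_image_of_injective _ Fin.val_injective]
      have h2 : T.image (fun q : Fin n => (q : ℕ)) = Finset.Icc 1 a := by
        ext v
        rw [Finset.mem_image, Finset.mem_Icc]
        constructor
        · rintro ⟨q, hq, rfl⟩
          rw [hT, Finset.mem_filter] at hq
          exact hq.2
        · intro hv
          refine ⟨⟨v, by omega⟩, ?_, rfl⟩
          rw [hT, Finset.mem_filter]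
          exact ⟨Finset.mem_univ _, by simpa using hv⟩
      rw [h1, h2, Nat.card_Icc]
      omega
    have : T ⊂ S := Finset.ssubset_iff_of_subset hTS |>.2 ⟨p, hpS, hpT⟩
    have := Finset.card_lt_card this
    omega
  -- bounds for the component functions
  have bound1 : ∀ i : Fin a, c + 1 ≤ (π (emb1 h i) : ℕ) ∧ (π (emb1 h i) : ℕ) < n := by
    intro i
    have hi := i.isLt
    have e1 : (emb1 h i : ℕ) = 1 + (i : ℕ) := rfl
    have := step1 (emb1 h i) (by omega) (by omega)
    exact ⟨by omega, (π (emb1 h i)).isLt⟩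
  have bound2 : ∀ j : Fin c, (π (emb2 h j) : ℕ) < c := by
    intro j
    have e1 : (emb2 h j : ℕ) = 1 + a + (j : ℕ) := rfl
    exact step2 (emb2 h j) (by omega)
  set f₁ : Fin a → Fin a := fun i => ⟨(π (emb1 h i) : ℕ) - (c + 1), by
    have := bound1 i; omega⟩ with hf₁
  set f₂ : Fin c → Fin c := fun j => ⟨(π (emb2 h j) : ℕ), bound2 j⟩ with hf₂
  have hinj1 : Function.Injective f₁ := by
    intro i i' he
    have hv : (f₁ i : ℕ) = (f₁ i' : ℕ) := congrArg Fin.val he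
    rw [hf₁] at hv
    simp at hv
    have b1 := bound1 i
    have b2 := bound1 i'
    have : (π (emb1 h i) : ℕ) = (π (emb1 h i') : ℕ) := by omega
    have := π.injective (Fin.ext this)
    have : (emb1 h i : ℕ) = (emb1 h i' : ℕ) := congrArg Fin.val this
    simp [emb1] at this
    exact Fin.ext this
  have hinj2 : Function.Injective f₂ := by
    intro j j' he
    have hv : (f₂ j : ℕ) = (f₂ j' : ℕ) := congrArg Fin.val he
    rw [hf₂] at hv
    simp at hv
    have := π.injective (Fin.ext hv)
    have : (emb2 h j : ℕ) = (emb2 h j' : ℕ) := congrArg Fin.val this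
    simp [emb2] at this
    exact Fin.ext this
  refine ⟨Equiv.ofBijective f₁ (Finite.injective_iff_bijective.1 hinj1),
    Equiv.ofBijective f₂ (Finite.injective_iff_bijective.1 hinj2), ?_⟩
  apply Equiv.ext
  intro k
  apply Fin.ext
  rcases fin_cases_region h k with hk0 | ⟨i, rfl⟩ | ⟨j, rfl⟩
  · rw [compose_val_zero h _ _ k hk0]
    have : k = z := Fin.ext hk0
    rw [this, ← hc]
  · rw [compose_val_emb1]
    have hb := bound1 i
    simp only [Equiv.ofBijective_apply, hf₁]
    omega
  · rw [compose_val_emb2]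
    simp only [Equiv.ofBijective_apply, hf₂]

end StmtAux
namespace StmtAux
open List Equiv

lemma count_add_length (l : List Bool) : l.count true + l.count false = l.length := by
  induction l with
  | nil => rfl
  | cons x t ih =>
    cases x <;> simp [List.count_cons] <;> omega

lemma prefix_append_cases {α : Type*} {p l₁ l₂ : List α} (h : p <+: l₁ ++ l₂) :
    p <+: l₁ ∨ ∃ r, p = l₁ ++ r ∧ r <+: l₂ := by
  by_cases hl : p.length ≤ l₁.length
  · exact Or.inl (List.prefix_of_prefix_length_le h (List.prefix_append l₁ l₂) hl)
  · right
    have h2 : l₁ <+: p := List.prefix_of_prefix_length_le (List.prefix_append _ _) h (by omega)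
    obtain ⟨r, rfl⟩ := h2
    refine ⟨r, rfl, ?_⟩
    obtain ⟨t, ht⟩ := h
    rw [List.append_assoc] at ht
    exact ⟨t, List.append_cancel_left ht⟩

lemma dyck_nil : IsDyckPath 0 [] := by
  refine ⟨rfl, rfl, ?_⟩
  intro p hp
  have : p = [] := List.prefix_nil.1 hp
  simp [this]

lemma dyck_glue {a b : ℕ} {l₁ l₂ : List Bool} (h₁ : IsDyckPath a l₁) (h₂ : IsDyckPath b l₂) :
    IsDyckPath (a + b + 1) (true :: l₁ ++ false :: l₂) := by
  obtain ⟨hlen1, hct1, hpre1⟩ := h₁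
  obtain ⟨hlen2, hct2, hpre2⟩ := h₂
  have hcf1 : l₁.count false = a := by have := count_add_length l₁; omega
  have hcf2 : l₂.count false = b := by have := count_add_length l₂; omega
  refine ⟨?_, ?_, ?_⟩
  · simp [List.length_append]; omega
  · simp [List.count_cons, List.count_append, hct1, hct2]
  · intro p hp
    rcases List.prefix_cons_iff.1 hp with rfl | ⟨q, rfl, hq⟩
    · simp
    · rcases prefix_append_cases hq with hql | ⟨r, rfl, hr⟩
      · have := hpre1 q hql
        simp [List.count_cons]
        omega
      · rcases List.prefix_cons_iff.1 hr with rfl | ⟨r', rfl, hr'⟩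
        · have := hpre1 l₁ (List.prefix_refl l₁)
          simp [List.count_cons, List.count_append]
          omega
        · have := hpre2 r' hr'
          simp [List.count_cons, List.count_append, hcf1, hct1]
          omega

lemma dyck_destruct {n : ℕ} {l : List Bool} (hl : IsDyckPath n l) (hn : 0 < n) :
    ∃ (a b : ℕ) (l₁ l₂ : List Bool), a + b + 1 = n ∧ l = true :: l₁ ++ false :: l₂ ∧
      IsDyckPath a l₁ ∧ IsDyckPath b l₂ := by
  classical
  obtain ⟨hlen, hct, hpre⟩ := hl
  have hcf : l.count false = n := by have := count_add_length l; omega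
  cases l with
  | nil => simp at hlen; omega
  | cons x t =>
    cases x with
    | false =>
      have := hpre [false] ⟨t, rfl⟩
      simp at this
    | true =>
      have hctt : t.count true = n - 1 := by
        simp [List.count_cons] at hct; omega
      have hcft : t.count false = n := by
        simp [List.count_cons] at hcf; omega
      have hlent : t.length = 2 * n - 1 := by
        simp at hlen; omega
      have hex : ∃ m, (t.take m).count true < (t.take m).count false := by
        refine ⟨t.length, ?_⟩
        rw [List.take_length, hctt, hcft]
        omega
      set k := Nat.find hex with hk
      have hspec := Nat.find_spec hex
      have hkpos : 0 < k := by
        rcases Nat.eq_zero_or_pos k with h0 | h0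
        · exfalso
          have := hspec
          rw [← hk] at this
          rw [h0] at this
          simp at this
        · exact h0
      have hkle : k ≤ t.length := Nat.find_min' hex (by
        rw [List.take_length, hctt, hcft]; omega)
      set m := k - 1 with hm
      have hmlt : m < t.length := by omega
      have hmnot : ¬ (t.take m).count true < (t.take m).count false :=
        Nat.find_min hex (by omega)
      have htake : t.take k = t.take m ++ [t[m]] := by
        have : k = m + 1 := by omega
        rw [this, List.take_succ, List.getElem?_eq_getElem hmlt]
        rfl
      have hx : t[m] = false := by
        by_contra hxf
        have hxt : t[m] = true := by
          cases hget : t[m]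
          · exact absurd hget hxf
          · rfl
        rw [htake, hxt] at hspec
        simp [List.count_append] at hspec
        omega
      rw [htake, hx] at hspec
      simp [List.count_append] at hspec
      have hbal : (t.take m).count true = (t.take m).count false := by omega
      set q := t.take m with hq
      set a := q.count true with ha
      -- t = q ++ false :: drop (m+1)
      have hdecomp : t = q ++ false :: t.drop (m+1) := by
        conv_lhs => rw [← List.take_append_drop m t]
        congr 1
        rw [List.drop_eq_getElem_cons hmlt, hx]
      set l₂ := t.drop (m+1) with hl₂
      have hqlen : q.length = m := by
        rw [hq, List.length_take]
        omega
      have hqlen2 : q.length = 2 * a := by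
        have := count_add_length q
        omega
      -- counts of l₂
      have hcteq : t.count true = a + l₂.count true := by
        conv_lhs => rw [hdecomp]
        simp [List.count_append, List.count_cons]; omega
      have hcfeq : t.count false = a + 1 + l₂.count false := by
        conv_lhs => rw [hdecomp]
        simp [List.count_append, List.count_cons]
        omega
      set b := l₂.count true with hb
      have hab : a + b + 1 = n := by
        have hlen2 : t.length = q.length + 1 + l₂.length := by
          conv_lhs => rw [hdecomp]
          simp
          omega
        have := count_add_length l₂
        omega
      refine ⟨a, b, q, l₂, hab, by rw [hdecomp]; rfl, ⟨by omega, rfl, ?_⟩, ⟨?_, rfl, ?_⟩⟩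
      · -- prefixes of q
        intro p hp
        have hple : p.length ≤ m := by
          have := hp.length_le
          omega
        have hpt : p = t.take p.length := by
          have h1 : p = q.take p.length := List.prefix_iff_eq_take.1 hp
          conv_lhs => rw [h1]
          rw [hq, List.take_take, min_eq_left hple]
        have hnot := Nat.find_min hex (show p.length < k by omega)
        rw [← hpt] at hnot
        omega
      · -- length of l₂
        have hlen2 : t.length = q.length + 1 + l₂.length := by
          conv_lhs => rw [hdecomp]
          simp
          omega
        have := count_add_length l₂
        omega
      · -- prefixes of l₂
        intro p hp
        obtain ⟨r, hr⟩ := hp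
        have hfull : (true :: q ++ false :: p) <+: (true :: t) := by
          refine ⟨r, ?_⟩
          rw [hdecomp, ← hr]
          simp
        have := hpre _ hfull
        simp [List.count_append, List.count_cons, hbal] at this
        omega

lemma dyck_no_lt_split {a a' : ℕ} {l₁ l₂ l₁' l₂' : List Bool}
    (h₁ : IsDyckPath a l₁) (h₁' : IsDyckPath a' l₁')
    (he : l₁ ++ false :: l₂ = l₁' ++ false :: l₂') : ¬ l₁.length < l₁'.length := by
  intro hlt
  have hpre : l₁ ++ [false] <+: l₁' := by
    have h3 : l₁ ++ [false] <+: l₁' ++ false :: l₂' := by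
      rw [← he]
      exact ⟨l₂, by simp⟩
    exact List.prefix_of_prefix_length_le h3 (List.prefix_append _ _) (by simp; omega)
  have hc := h₁'.2.2 _ hpre
  have hcf : l₁.count false = a := by
    have := count_add_length l₁
    have := h₁.1
    have := h₁.2.1
    omega
  have e : (l₁ ++ [false]).count false = a + 1 := by simp [List.count_append, hcf]
  have e2 : (l₁ ++ [false]).count true = a := by simp [List.count_append, h₁.2.1]
  rw [e, e2] at hc
  omega

lemma dyck_split_unique {a a' : ℕ} {l₁ l₂ l₁' l₂' : List Bool}
    (h₁ : IsDyckPath a l₁) (h₁' : IsDyckPath a' l₁')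
    (he : l₁ ++ false :: l₂ = l₁' ++ false :: l₂') : l₁ = l₁' ∧ l₂ = l₂' := by
  have hlen : l₁.length = l₁'.length := by
    rcases lt_trichotomy l₁.length l₁'.length with h | h | h
    · exact absurd h (dyck_no_lt_split h₁ h₁' he)
    · exact h
    · exact absurd h (dyck_no_lt_split h₁' h₁ he.symm)
  obtain ⟨e1, e2⟩ := List.append_inj he hlen
  exact ⟨e1, by simpa using e2⟩

end StmtAux
namespace StmtAux
open List Equiv

lemma main_maps : ∀ n : ℕ, ∀ π : Equiv.Perm (Fin n), ¬ Contains213 π → IsDyckPath n (phi π) := by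
  intro n
  induction n using Nat.strong_induction_on with
  | _ n IH =>
    intro π hπ
    rcases Nat.eq_zero_or_pos n with hn | hn
    · rw [phi_eq_nil π hn, hn]
      exact dyck_nil
    · obtain ⟨a, b, h, π₁, π₂, rfl⟩ := exists_decomp π hn hπ
      have h₁ := IH a (by omega) π₁
        (fun hc => hπ ((contains_compose_iff h π₁ π₂).2 (Or.inl hc)))
      have h₂ := IH b (by omega) π₂
        (fun hc => hπ ((contains_compose_iff h π₁ π₂).2 (Or.inr hc)))
      rw [phi_compose]
      have := dyck_glue h₁ h₂
      rwa [h] at this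

lemma main_inj : ∀ n : ℕ, ∀ π σ : Equiv.Perm (Fin n), ¬ Contains213 π → ¬ Contains213 σ →
    phi π = phi σ → π = σ := by
  intro n
  induction n using Nat.strong_induction_on with
  | _ n IH =>
    intro π σ hπ hσ he
    rcases Nat.eq_zero_or_pos n with hn | hn
    · apply Equiv.ext
      intro x
      exact absurd x.isLt (by omega)
    · obtain ⟨a, b, h, π₁, π₂, rfl⟩ := exists_decomp π hn hπ
      obtain ⟨a', b', h', σ₁, σ₂, rfl⟩ := exists_decomp σ hn hσ
      have hπ₁ : ¬ Contains213 π₁ :=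
        fun hc => hπ ((contains_compose_iff h π₁ π₂).2 (Or.inl hc))
      have hπ₂ : ¬ Contains213 π₂ :=
        fun hc => hπ ((contains_compose_iff h π₁ π₂).2 (Or.inr hc))
      have hσ₁ : ¬ Contains213 σ₁ :=
        fun hc => hσ ((contains_compose_iff h' σ₁ σ₂).2 (Or.inl hc))
      have hσ₂ : ¬ Contains213 σ₂ :=
        fun hc => hσ ((contains_compose_iff h' σ₁ σ₂).2 (Or.inr hc))
      rw [phi_compose, phi_compose] at he
      have he2 : phi π₁ ++ false :: phi π₂ = phi σ₁ ++ false :: phi σ₂ := by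
        simpa using he
      have d1 := main_maps a π₁ hπ₁
      have d1' := main_maps a' σ₁ hσ₁
      obtain ⟨e1, e2⟩ := dyck_split_unique d1 d1' he2
      have haa : a = a' := by
        have l1 := d1.1
        have l2 := d1'.1
        rw [e1] at l1
        omega
      subst haa
      have hbb : b = b' := by omega
      subst hbb
      have hp1 : π₁ = σ₁ := IH a (by omega) π₁ σ₁ hπ₁ hσ₁ e1
      have hp2 : π₂ = σ₂ := IH b (by omega) π₂ σ₂ hπ₂ hσ₂ e2
      subst hp1
      subst hp2
      rfl

lemma main_surj : ∀ n : ℕ, ∀ l : List Bool, IsDyckPath n l →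
    ∃ π : Equiv.Perm (Fin n), ¬ Contains213 π ∧ phi π = l := by
  intro n
  induction n using Nat.strong_induction_on with
  | _ n IH =>
    intro l hl
    rcases Nat.eq_zero_or_pos n with hn | hn
    · have : l = [] := by
        have := hl.1
        rw [hn] at this
        simpa using List.eq_nil_of_length_eq_zero this
      subst this
      refine ⟨Equiv.refl _, ?_, phi_eq_nil _ hn⟩
      rintro ⟨i, _, _, _⟩
      exact absurd i.isLt (by omega)
    · obtain ⟨a, b, l₁, l₂, hab, rfl, h₁, h₂⟩ := dyck_destruct hl hn
      obtain ⟨π₁, hπ₁, he₁⟩ := IH a (by omega) l₁ h₁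
      obtain ⟨π₂, hπ₂, he₂⟩ := IH b (by omega) l₂ h₂
      refine ⟨compose hab π₁ π₂, ?_, ?_⟩
      · intro hc
        rcases (contains_compose_iff hab π₁ π₂).1 hc with hc1 | hc2
        · exact hπ₁ hc1
        · exact hπ₂ hc2
      · rw [phi_compose, he₁, he₂]
        rfl

end StmtAux


theorem stmt3 (n : ℕ) :
    (∀ π : Equiv.Perm (Fin n), ¬ Contains213 π → IsDyckPath n (phi π)) ∧
    Set.BijOn phi {π : Equiv.Perm (Fin n) | ¬ Contains213 π}
      {l : List Bool | IsDyckPath n l} := by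
  refine ⟨fun π hπ => StmtAux.main_maps n π hπ, ?_, ?_, ?_⟩
  · intro π hπ
    exact StmtAux.main_maps n π hπ
  · intro π hπ σ hσ he
    exact StmtAux.main_inj n π σ hπ hσ he
  · intro l hl
    obtain ⟨π, hπ, he⟩ := StmtAux.main_surj n l hl
    exact ⟨π, hπ, he⟩
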